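/- Let k be a field, V a finite set, A the k-algebra of all functions V → k, and A^(2) the k-algebra of all functions V^(2) → k, both with pointwise operations. Let P be a nonempty subset of V^(2), let I be the ideal of A^(2) consisting of all functions vanishing outside P, and set S(I) := {h ∈ A : (h⊗1 − 1⊗h)·a = 0 for all a ∈ I}, where (h⊗1 − 1⊗h) denotes the function (u,v) ↦ h(u) − h(v) on V^(2). Then the dimension of S(I) as a k-vector space equals the number of connected components of the undirected graph G_P on vertex set V whose edges are the unordered pairs {u,v} such that (u,v) ∈ P or (v,u) ∈ P. -/

import Mathlib

def Tup (V : Type*) (s : ℕ) : Type _ :=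
  {f : Fin s → V // Function.Injective f}

/-- The ideal of functions on `V^(2)` vanishing outside `P`. -/
def vanishOutside (k : Type*) {V : Type*} [Field k] (P : Set (Tup V 2)) :
    Ideal (Tup V 2 → k) where
  carrier := {a | ∀ w ∉ P, a w = 0}
  zero_mem' := by intro w _; rfl
  add_mem' := by
    intro a b ha hb w hw
    simp [Pi.add_apply, ha w hw, hb w hw]
  smul_mem' := by
    intro c a ha w hw
    simp [Pi.smul_apply, smul_eq_mul, ha w hw]

/-- The function `h ⊗ 1 − 1 ⊗ h : (u, v) ↦ h(u) − h(v)` on `V^(2)`. -/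
def diffFun {k V : Type*} [Field k] (h : V → k) : Tup V 2 → k :=
  fun w => h (w.1 0) - h (w.1 1)

/-- The subalgebra `S(I) = {h : (h⊗1 − 1⊗h)·a = 0 for all a ∈ I}`, as a `k`-subspace. -/
def SSub (k : Type*) {V : Type*} [Field k] (P : Set (Tup V 2)) : Submodule k (V → k) where
  carrier := {h | ∀ a ∈ vanishOutside k P, diffFun h * a = 0}
  zero_mem' := by
    intro a _
    funext w
    simp [diffFun]
  add_mem' := by
    intro h₁ h₂ hh₁ hh₂ a ha
    funext w
    have e₁ := congrFun (hh₁ a ha) w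
    have e₂ := congrFun (hh₂ a ha) w
    simp only [diffFun, Pi.mul_apply, Pi.add_apply, Pi.zero_apply] at e₁ e₂ ⊢
    linear_combination e₁ + e₂
  smul_mem' := by
    intro c h hh a ha
    funext w
    have e := congrFun (hh a ha) w
    simp only [diffFun, Pi.mul_apply, Pi.smul_apply, Pi.zero_apply, smul_eq_mul] at e ⊢
    linear_combination c * e

/-- The undirected graph on `V` whose edges are pairs `{u, v}` with `(u,v) ∈ P` or
`(v,u) ∈ P`. -/
def pairGraph {V : Type*} (P : Set (Tup V 2)) : SimpleGraph V where
  Adj u v := ∃ w ∈ P, (w.1 0 = u ∧ w.1 1 = v) ∨ (w.1 0 = v ∧ w.1 1 = u)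
  symm := by
    constructor
    intro u v ⟨w, hw, h⟩
    exact ⟨w, hw, h.symm⟩
  loopless := by
    constructor
    intro u ⟨w, hw, h⟩
    have h01 : w.1 0 = w.1 1 := by
      rcases h with ⟨h0, h1⟩ | ⟨h0, h1⟩ <;> rw [h0, h1]
    exact absurd (w.2 h01) (by decide)

lemma mem_SSub_iff {k V : Type*} [Field k] (P : Set (Tup V 2)) (h : V → k) :
    h ∈ SSub k P ↔ ∀ w ∈ P, h (w.1 0) = h (w.1 1) := by
  classical
  constructor
  · intro hh w hw
    have ha : (fun x => if x = w then (1 : k) else 0) ∈ vanishOutside k P := by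
      intro x hx
      simp only
      rw [if_neg]
      rintro rfl
      exact hx hw
    have := congrFun (hh _ ha) w
    simp only [diffFun, Pi.mul_apply, Pi.zero_apply, if_pos rfl, if_true, mul_one] at this
    exact sub_eq_zero.mp this
  · intro hh a ha
    funext x
    by_cases hx : x ∈ P
    · simp [diffFun, hh x hx]
    · simp [diffFun, ha x hx]

/-- The dimension of `S(I)` equals the number of connected components of
the graph `G_P`. -/
theorem stmt16 {k V : Type*} [Field k] [Fintype V] (P : Set (Tup V 2)) (hP : P.Nonempty) :
    Module.finrank k (SSub k P) = Nat.card (pairGraph P).ConnectedComponent := by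
  classical
  letI : Fintype (pairGraph P).ConnectedComponent := Fintype.ofFinite _
  let L : ((pairGraph P).ConnectedComponent → k) →ₗ[k] (V → k) :=
    { toFun := fun f v => f ((pairGraph P).connectedComponentMk v)
      map_add' := fun f g => rfl
      map_smul' := fun c f => rfl }
  have hinj : Function.Injective L := by
    intro f g hfg
    funext c
    refine SimpleGraph.ConnectedComponent.ind (fun v => ?_) c
    exact congrFun hfg v
  have hrange : LinearMap.range L = SSub k P := by
    ext h
    constructor
    · rintro ⟨f, rfl⟩
      rw [mem_SSub_iff]
      intro w hw
      have hadj : (pairGraph P).Adj (w.1 0) (w.1 1) := ⟨w, hw, Or.inl ⟨rfl, rfl⟩⟩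
      exact congrArg f (SimpleGraph.ConnectedComponent.sound hadj.reachable)
    · intro hh
      rw [mem_SSub_iff] at hh
      have hadj : ∀ ⦃u v : V⦄, (pairGraph P).Adj u v → h u = h v := by
        rintro u v ⟨w, hw, ⟨h0, h1⟩ | ⟨h0, h1⟩⟩
        · rw [← h0, ← h1]; exact hh w hw
        · rw [← h0, ← h1]; exact (hh w hw).symm
      have hwalk : ∀ {u v : V} (p : (pairGraph P).Walk u v), h u = h v := by
        intro u v p
        induction p with
        | nil => rfl
        | cons ha' _ ih => exact (hadj ha').trans ih
      exact ⟨SimpleGraph.ConnectedComponent.lift h (fun u v p _ => hwalk p), rfl⟩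
  calc Module.finrank k (SSub k P)
      = Module.finrank k (LinearMap.range L) := by rw [hrange]
    _ = Module.finrank k ((pairGraph P).ConnectedComponent → k) :=
        (LinearEquiv.finrank_eq (LinearEquiv.ofInjective L hinj)).symm
    _ = Fintype.card (pairGraph P).ConnectedComponent :=
        Module.finrank_fintype_fun_eq_card k
    _ = Nat.card (pairGraph P).ConnectedComponent := (Nat.card_eq_fintype_card).symm
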